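/- In tight competition (both backers must pledge to project 1 for it to succeed), when project 1 is high-quality and project 2 is low-quality (V = (1,0)), observational learning never harms project 1's success probability: for all p₁, p₂ ∈ (1/2, 1), P(x₁=1 | (1,0)) · P(x₂=1 | x₁=1, (1,0)) ≥ P(x₁=1 | (1,0)) · P^{NL}(x₂=1 | (1,0)), where P^{NL}(x₂=1 | (1,0)) = a₂(1+a₂)/2 with a₂ = p₂² + (1−p₂)². -/

import Mathlib

open Finset

/-- Probability of signal pair `s` given quality state `V` for a backer with expertness `p`:
signals are independent per project and correct with probability `p`
(`true` = high quality / high signal). -/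
noncomputable def sigProb (p : ℝ) (V s : Bool × Bool) : ℝ :=
  (if s.1 = V.1 then p else 1 - p) * (if s.2 = V.2 then p else 1 - p)

/-- Bayesian posterior over quality state `V` given own signals `s`, uniform prior. -/
noncomputable def post (p : ℝ) (s V : Bool × Bool) : ℝ :=
  sigProb p V s / ∑ V' : Bool × Bool, sigProb p V' s

/-- Probability of pledging to project 1 given own signals `s`. -/
noncomputable def pledge1 (p : ℝ) (s : Bool × Bool) : ℝ :=
  post p s (true, false) + (1/2) * post p s (true, true)

/-- Probability of pledging to project 2 given own signals `s`. -/
noncomputable def pledge2 (p : ℝ) (s : Bool × Bool) : ℝ :=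
  post p s (false, true) + (1/2) * post p s (true, true)

/-- Probability of abstaining given own signals `s`. -/
noncomputable def abstain (p : ℝ) (s : Bool × Bool) : ℝ :=
  post p s (false, false)

/-- Unconditional (on signals) probability of pledging to project 1 in state `V`. -/
noncomputable def condPledge1 (p : ℝ) (V : Bool × Bool) : ℝ :=
  ∑ s : Bool × Bool, sigProb p V s * pledge1 p s

/-- Unconditional probability of pledging to project 2 in state `V`. -/
noncomputable def condPledge2 (p : ℝ) (V : Bool × Bool) : ℝ :=
  ∑ s : Bool × Bool, sigProb p V s * pledge2 p s

/-- Unconditional probability of abstaining in state `V`. -/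
noncomputable def condAbstain (p : ℝ) (V : Bool × Bool) : ℝ :=
  ∑ s : Bool × Bool, sigProb p V s * abstain p s

/-- Second backer's posterior over state V given that the first backer pledged to
project 1 and own signals s. -/
noncomputable def postOL (p1 p2 : ℝ) (s V : Bool × Bool) : ℝ :=
  condPledge1 p1 V * sigProb p2 V s /
    ∑ V' : Bool × Bool, condPledge1 p1 V' * sigProb p2 V' s

/-- Second backer's probability of pledging to project 1 in true state V, given
that the first backer pledged to project 1, under observational learning. -/
noncomputable def pledge1OL (p1 p2 : ℝ) (V : Bool × Bool) : ℝ :=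
  ∑ s : Bool × Bool, sigProb p2 V s *
    (postOL p1 p2 s (true, false) + (1/2) * postOL p1 p2 s (true, true))

lemma sumSig (p : ℝ) (s : Bool × Bool) : ∑ V' : Bool × Bool, sigProb p V' s = 1 := by
  obtain ⟨s1, s2⟩ := s
  cases s1 <;> cases s2 <;>
    simp [sigProb, Fintype.sum_prod_type, Fintype.sum_bool] <;> ring

lemma cp10 (p : ℝ) : condPledge1 p (true, false)
    = (p^2+(1-p)^2) * (1 + (p^2+(1-p)^2)) / 2 := by
  simp [condPledge1, pledge1, post, sumSig, sigProb, Fintype.sum_prod_type, Fintype.sum_bool]; ring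
lemma cp11 (p : ℝ) : condPledge1 p (true, true)
    = (p^2+(1-p)^2) * (2 - (p^2+(1-p)^2)) / 2 := by
  simp [condPledge1, pledge1, post, sumSig, sigProb, Fintype.sum_prod_type, Fintype.sum_bool]; ring
lemma cp01 (p : ℝ) : condPledge1 p (false, true)
    = (1-(p^2+(1-p)^2)) * (2 - (p^2+(1-p)^2)) / 2 := by
  simp [condPledge1, pledge1, post, sumSig, sigProb, Fintype.sum_prod_type, Fintype.sum_bool]; ring
lemma cp00 (p : ℝ) : condPledge1 p (false, false)
    = (1-(p^2+(1-p)^2)) * (1 + (p^2+(1-p)^2)) / 2 := by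
  simp [condPledge1, pledge1, post, sumSig, sigProb, Fintype.sum_prod_type, Fintype.sum_bool]; ring

lemma mpos {x y z : ℝ} (hx : 0 < x) (hy : 0 < y) (hz : 0 < z) : 0 < x*y/2*z :=
  mul_pos (div_pos (mul_pos hx hy) two_pos) hz

set_option linter.unreachableTactic false
set_option linter.unnecessarySeqFocus false
set_option linter.unusedTactic false
set_option linter.unusedVariables false
set_option maxRecDepth 10000 in
set_option maxHeartbeats 8000000 in
lemma keygen (a q : ℝ) (ha : 1/2 < a) (ha' : a < 1) (hq : 1/2 < q) (hq' : q < 1) :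
    (q ^ 2 + (1 - q) ^ 2) * (1 + (q ^ 2 + (1 - q) ^ 2)) / 2 ≤
    q * (1 - q) *
          ((a) * (1 + (a)) / 2 * (q * (1 - q)) /
              ((a) * (2 - (a)) / 2 * (q * q) +
                  (a) * (1 + (a)) / 2 * (q * (1 - q)) +
                ((1 - (a)) * (2 - (a)) / 2 * ((1 - q) * q) +
                  (1 - (a)) * (1 + (a)) / 2 * ((1 - q) * (1 - q)))) +
            1 / 2 *
              ((a) * (2 - (a)) / 2 * (q * q) /
                ((a) * (2 - (a)) / 2 * (q * q) +
                    (a) * (1 + (a)) / 2 * (q * (1 - q)) +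
                  ((1 - (a)) * (2 - (a)) / 2 * ((1 - q) * q) +
                    (1 - (a)) * (1 + (a)) / 2 * ((1 - q) * (1 - q)))))) +
        q * q *
          ((a) * (1 + (a)) / 2 * (q * q) /
              ((a) * (2 - (a)) / 2 * (q * (1 - q)) +
                  (a) * (1 + (a)) / 2 * (q * q) +
                ((1 - (a)) * (2 - (a)) / 2 * ((1 - q) * (1 - q)) +
                  (1 - (a)) * (1 + (a)) / 2 * ((1 - q) * q))) +
            1 / 2 *
              ((a) * (2 - (a)) / 2 * (q * (1 - q)) /
                ((a) * (2 - (a)) / 2 * (q * (1 - q)) +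
                    (a) * (1 + (a)) / 2 * (q * q) +
                  ((1 - (a)) * (2 - (a)) / 2 * ((1 - q) * (1 - q)) +
                    (1 - (a)) * (1 + (a)) / 2 * ((1 - q) * q))))) +
      ((1 - q) * (1 - q) *
          ((a) * (1 + (a)) / 2 * ((1 - q) * (1 - q)) /
              ((a) * (2 - (a)) / 2 * ((1 - q) * q) +
                  (a) * (1 + (a)) / 2 * ((1 - q) * (1 - q)) +
                ((1 - (a)) * (2 - (a)) / 2 * (q * q) +
                  (1 - (a)) * (1 + (a)) / 2 * (q * (1 - q)))) +
            1 / 2 *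
              ((a) * (2 - (a)) / 2 * ((1 - q) * q) /
                ((a) * (2 - (a)) / 2 * ((1 - q) * q) +
                    (a) * (1 + (a)) / 2 * ((1 - q) * (1 - q)) +
                  ((1 - (a)) * (2 - (a)) / 2 * (q * q) +
                    (1 - (a)) * (1 + (a)) / 2 * (q * (1 - q)))))) +
        (1 - q) * q *
          ((a) * (1 + (a)) / 2 * ((1 - q) * q) /
              ((a) * (2 - (a)) / 2 * ((1 - q) * (1 - q)) +
                  (a) * (1 + (a)) / 2 * ((1 - q) * q) +
                ((1 - (a)) * (2 - (a)) / 2 * (q * (1 - q)) +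
                  (1 - (a)) * (1 + (a)) / 2 * (q * q))) +
            1 / 2 *
              ((a) * (2 - (a)) / 2 * ((1 - q) * (1 - q)) /
                ((a) * (2 - (a)) / 2 * ((1 - q) * (1 - q)) +
                    (a) * (1 + (a)) / 2 * ((1 - q) * q) +
                  ((1 - (a)) * (2 - (a)) / 2 * (q * (1 - q)) +
                    (1 - (a)) * (1 + (a)) / 2 * (q * q)))))) := by
  have hq0 : 0 < q := by linarith
  have hq1 : 0 < 1 - q := by linarith
  have ha0 : 0 < a := by linarith
  have ha1 : 0 < 1 - a := by linarith
  have ha2 : 0 < 2 - a := by linarith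
  have ha3 : 0 < 1 + a := by linarith
  have hd1 : 0 < (a)*(2-(a))/2*(q*q) + (a)*(1+(a))/2*(q*(1-q)) + ((1-(a))*(2-(a))/2*((1-q)*q) + (1-(a))*(1+(a))/2*((1-q)*(1-q))) :=
    add_pos (add_pos (mpos ha0 ha2 (mul_pos hq0 hq0)) (mpos ha0 ha3 (mul_pos hq0 hq1)))
      (add_pos (mpos ha1 ha2 (mul_pos hq1 hq0)) (mpos ha1 ha3 (mul_pos hq1 hq1)))
  have hd2 : 0 < (a)*(2-(a))/2*(q*(1-q)) + (a)*(1+(a))/2*(q*q) + ((1-(a))*(2-(a))/2*((1-q)*(1-q)) + (1-(a))*(1+(a))/2*((1-q)*q)) :=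
    add_pos (add_pos (mpos ha0 ha2 (mul_pos hq0 hq1)) (mpos ha0 ha3 (mul_pos hq0 hq0)))
      (add_pos (mpos ha1 ha2 (mul_pos hq1 hq1)) (mpos ha1 ha3 (mul_pos hq1 hq0)))
  have hd3 : 0 < (a)*(2-(a))/2*((1-q)*q) + (a)*(1+(a))/2*((1-q)*(1-q)) + ((1-(a))*(2-(a))/2*(q*q) + (1-(a))*(1+(a))/2*(q*(1-q))) :=
    add_pos (add_pos (mpos ha0 ha2 (mul_pos hq1 hq0)) (mpos ha0 ha3 (mul_pos hq1 hq1)))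
      (add_pos (mpos ha1 ha2 (mul_pos hq0 hq0)) (mpos ha1 ha3 (mul_pos hq0 hq1)))
  have hd4 : 0 < (a)*(2-(a))/2*((1-q)*(1-q)) + (a)*(1+(a))/2*((1-q)*q) + ((1-(a))*(2-(a))/2*(q*(1-q)) + (1-(a))*(1+(a))/2*(q*q)) :=
    add_pos (add_pos (mpos ha0 ha2 (mul_pos hq1 hq1)) (mpos ha0 ha3 (mul_pos hq1 hq0)))
      (add_pos (mpos ha1 ha2 (mul_pos hq0 hq1)) (mpos ha1 ha3 (mul_pos hq0 hq0)))
  have hE : (q * (1 - q) *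
          ((a) * (1 + (a)) / 2 * (q * (1 - q)) /
              ((a) * (2 - (a)) / 2 * (q * q) +
                  (a) * (1 + (a)) / 2 * (q * (1 - q)) +
                ((1 - (a)) * (2 - (a)) / 2 * ((1 - q) * q) +
                  (1 - (a)) * (1 + (a)) / 2 * ((1 - q) * (1 - q)))) +
            1 / 2 *
              ((a) * (2 - (a)) / 2 * (q * q) /
                ((a) * (2 - (a)) / 2 * (q * q) +
                    (a) * (1 + (a)) / 2 * (q * (1 - q)) +
                  ((1 - (a)) * (2 - (a)) / 2 * ((1 - q) * q) +
                    (1 - (a)) * (1 + (a)) / 2 * ((1 - q) * (1 - q)))))) +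
        q * q *
          ((a) * (1 + (a)) / 2 * (q * q) /
              ((a) * (2 - (a)) / 2 * (q * (1 - q)) +
                  (a) * (1 + (a)) / 2 * (q * q) +
                ((1 - (a)) * (2 - (a)) / 2 * ((1 - q) * (1 - q)) +
                  (1 - (a)) * (1 + (a)) / 2 * ((1 - q) * q))) +
            1 / 2 *
              ((a) * (2 - (a)) / 2 * (q * (1 - q)) /
                ((a) * (2 - (a)) / 2 * (q * (1 - q)) +
                    (a) * (1 + (a)) / 2 * (q * q) +
                  ((1 - (a)) * (2 - (a)) / 2 * ((1 - q) * (1 - q)) +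
                    (1 - (a)) * (1 + (a)) / 2 * ((1 - q) * q))))) +
      ((1 - q) * (1 - q) *
          ((a) * (1 + (a)) / 2 * ((1 - q) * (1 - q)) /
              ((a) * (2 - (a)) / 2 * ((1 - q) * q) +
                  (a) * (1 + (a)) / 2 * ((1 - q) * (1 - q)) +
                ((1 - (a)) * (2 - (a)) / 2 * (q * q) +
                  (1 - (a)) * (1 + (a)) / 2 * (q * (1 - q)))) +
            1 / 2 *
              ((a) * (2 - (a)) / 2 * ((1 - q) * q) /
                ((a) * (2 - (a)) / 2 * ((1 - q) * q) +
                    (a) * (1 + (a)) / 2 * ((1 - q) * (1 - q)) +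
                  ((1 - (a)) * (2 - (a)) / 2 * (q * q) +
                    (1 - (a)) * (1 + (a)) / 2 * (q * (1 - q)))))) +
        (1 - q) * q *
          ((a) * (1 + (a)) / 2 * ((1 - q) * q) /
              ((a) * (2 - (a)) / 2 * ((1 - q) * (1 - q)) +
                  (a) * (1 + (a)) / 2 * ((1 - q) * q) +
                ((1 - (a)) * (2 - (a)) / 2 * (q * (1 - q)) +
                  (1 - (a)) * (1 + (a)) / 2 * (q * q))) +
            1 / 2 *
              ((a) * (2 - (a)) / 2 * ((1 - q) * (1 - q)) /
                ((a) * (2 - (a)) / 2 * ((1 - q) * (1 - q)) +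
                    (a) * (1 + (a)) / 2 * ((1 - q) * q) +
                  ((1 - (a)) * (2 - (a)) / 2 * (q * (1 - q)) +
                    (1 - (a)) * (1 + (a)) / 2 * (q * q)))))))
      = (q*(1-q)*((a)*(1+(a))/2*(q*(1-q)) + (a)*(2-(a))/2*(q*q)/2))/((a)*(2-(a))/2*(q*q) + (a)*(1+(a))/2*(q*(1-q)) + ((1-(a))*(2-(a))/2*((1-q)*q) + (1-(a))*(1+(a))/2*((1-q)*(1-q)))) + (q*q*((a)*(1+(a))/2*(q*q) + (a)*(2-(a))/2*(q*(1-q))/2))/((a)*(2-(a))/2*(q*(1-q)) + (a)*(1+(a))/2*(q*q) + ((1-(a))*(2-(a))/2*((1-q)*(1-q)) + (1-(a))*(1+(a))/2*((1-q)*q)))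
        + (((1-q)*(1-q)*((a)*(1+(a))/2*((1-q)*(1-q)) + (a)*(2-(a))/2*((1-q)*q)/2))/((a)*(2-(a))/2*((1-q)*q) + (a)*(1+(a))/2*((1-q)*(1-q)) + ((1-(a))*(2-(a))/2*(q*q) + (1-(a))*(1+(a))/2*(q*(1-q)))) + ((1-q)*q*((a)*(1+(a))/2*((1-q)*q) + (a)*(2-(a))/2*((1-q)*(1-q))/2))/((a)*(2-(a))/2*((1-q)*(1-q)) + (a)*(1+(a))/2*((1-q)*q) + ((1-(a))*(2-(a))/2*(q*(1-q)) + (1-(a))*(1+(a))/2*(q*q)))) := by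
    ring
  rw [hE, div_add_div _ _ hd1.ne' hd2.ne', div_add_div _ _ hd3.ne' hd4.ne',
    div_add_div _ _ (mul_pos hd1 hd2).ne' (mul_pos hd3 hd4).ne',
    le_div_iff₀ (mul_pos (mul_pos hd1 hd2) (mul_pos hd3 hd4))]
  have cert : (0:ℝ) ≤ (552960:ℝ) * (2*a-1)^1 * ((1-a)/2)^7 * ((2*q-1)^2)^0 * (q*(1-q))^6 +
      (746496:ℝ) * (2*a-1)^1 * ((1-a)/2)^7 * ((2*q-1)^2)^1 * (q*(1-q))^5 +
      (400896:ℝ) * (2*a-1)^1 * ((1-a)/2)^7 * ((2*q-1)^2)^2 * (q*(1-q))^4 +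
      (107136:ℝ) * (2*a-1)^1 * ((1-a)/2)^7 * ((2*q-1)^2)^3 * (q*(1-q))^3 +
      (14256:ℝ) * (2*a-1)^1 * ((1-a)/2)^7 * ((2*q-1)^2)^4 * (q*(1-q))^2 +
      (756:ℝ) * (2*a-1)^1 * ((1-a)/2)^7 * ((2*q-1)^2)^5 * (q*(1-q))^1 +
      (981504:ℝ) * (2*a-1)^2 * ((1-a)/2)^6 * ((2*q-1)^2)^0 * (q*(1-q))^6 +
      (1287936:ℝ) * (2*a-1)^2 * ((1-a)/2)^6 * ((2*q-1)^2)^1 * (q*(1-q))^5 +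
      (671616:ℝ) * (2*a-1)^2 * ((1-a)/2)^6 * ((2*q-1)^2)^2 * (q*(1-q))^4 +
      (174096:ℝ) * (2*a-1)^2 * ((1-a)/2)^6 * ((2*q-1)^2)^3 * (q*(1-q))^3 +
      (22446:ℝ) * (2*a-1)^2 * ((1-a)/2)^6 * ((2*q-1)^2)^4 * (q*(1-q))^2 +
      (1152:ℝ) * (2*a-1)^2 * ((1-a)/2)^6 * ((2*q-1)^2)^5 * (q*(1-q))^1 +
      (746496:ℝ) * (2*a-1)^3 * ((1-a)/2)^5 * ((2*q-1)^2)^0 * (q*(1-q))^6 +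
      (939648:ℝ) * (2*a-1)^3 * ((1-a)/2)^5 * ((2*q-1)^2)^1 * (q*(1-q))^5 +
      (467808:ℝ) * (2*a-1)^3 * ((1-a)/2)^5 * ((2*q-1)^2)^2 * (q*(1-q))^4 +
      (115128:ℝ) * (2*a-1)^3 * ((1-a)/2)^5 * ((2*q-1)^2)^3 * (q*(1-q))^3 +
      (13998:ℝ) * (2*a-1)^3 * ((1-a)/2)^5 * ((2*q-1)^2)^4 * (q*(1-q))^2 +
      (672:ℝ) * (2*a-1)^3 * ((1-a)/2)^5 * ((2*q-1)^2)^5 * (q*(1-q))^1 +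
      (315360:ℝ) * (2*a-1)^4 * ((1-a)/2)^4 * ((2*q-1)^2)^0 * (q*(1-q))^6 +
      (375120:ℝ) * (2*a-1)^4 * ((1-a)/2)^4 * ((2*q-1)^2)^1 * (q*(1-q))^5 +
      (174830:ℝ) * (2*a-1)^4 * ((1-a)/2)^4 * ((2*q-1)^2)^2 * (q*(1-q))^4 +
      (39782:ℝ) * (2*a-1)^4 * ((1-a)/2)^4 * ((2*q-1)^2)^3 * (q*(1-q))^3 +
      (4396:ℝ) * (2*a-1)^4 * ((1-a)/2)^4 * ((2*q-1)^2)^4 * (q*(1-q))^2 +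
      (187:ℝ) * (2*a-1)^4 * ((1-a)/2)^4 * ((2*q-1)^2)^5 * (q*(1-q))^1 +
      (79920:ℝ) * (2*a-1)^5 * ((1-a)/2)^3 * ((2*q-1)^2)^0 * (q*(1-q))^6 +
      (88260:ℝ) * (2*a-1)^5 * ((1-a)/2)^3 * ((2*q-1)^2)^1 * (q*(1-q))^5 +
      (37585:ℝ) * (2*a-1)^5 * ((1-a)/2)^3 * ((2*q-1)^2)^2 * (q*(1-q))^4 +
      ((30539:ℝ)/4) * (2*a-1)^5 * ((1-a)/2)^3 * ((2*q-1)^2)^3 * (q*(1-q))^3 +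
      ((1451:ℝ)/2) * (2*a-1)^5 * ((1-a)/2)^3 * ((2*q-1)^2)^4 * (q*(1-q))^2 +
      ((99:ℝ)/4) * (2*a-1)^5 * ((1-a)/2)^3 * ((2*q-1)^2)^5 * (q*(1-q))^1 +
      (12150:ℝ) * (2*a-1)^6 * ((1-a)/2)^2 * ((2*q-1)^2)^0 * (q*(1-q))^6 +
      (12189:ℝ) * (2*a-1)^6 * ((1-a)/2)^2 * ((2*q-1)^2)^1 * (q*(1-q))^5 +
      ((36735:ℝ)/8) * (2*a-1)^6 * ((1-a)/2)^2 * ((2*q-1)^2)^2 * (q*(1-q))^4 +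
      ((1581:ℝ)/2) * (2*a-1)^6 * ((1-a)/2)^2 * ((2*q-1)^2)^3 * (q*(1-q))^3 +
      ((469:ℝ)/8) * (2*a-1)^6 * ((1-a)/2)^2 * ((2*q-1)^2)^4 * (q*(1-q))^2 +
      ((5:ℝ)/4) * (2*a-1)^6 * ((1-a)/2)^2 * ((2*q-1)^2)^5 * (q*(1-q))^1 +
      (1026:ℝ) * (2*a-1)^7 * ((1-a)/2)^1 * ((2*q-1)^2)^0 * (q*(1-q))^6 +
      (909:ℝ) * (2*a-1)^7 * ((1-a)/2)^1 * ((2*q-1)^2)^1 * (q*(1-q))^5 +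
      ((2311:ℝ)/8) * (2*a-1)^7 * ((1-a)/2)^1 * ((2*q-1)^2)^2 * (q*(1-q))^4 +
      ((615:ℝ)/16) * (2*a-1)^7 * ((1-a)/2)^1 * ((2*q-1)^2)^3 * (q*(1-q))^3 +
      ((7:ℝ)/4) * (2*a-1)^7 * ((1-a)/2)^1 * ((2*q-1)^2)^4 * (q*(1-q))^2 +
      ((297:ℝ)/8) * (2*a-1)^8 * ((1-a)/2)^0 * ((2*q-1)^2)^0 * (q*(1-q))^6 +
      ((447:ℝ)/16) * (2*a-1)^8 * ((1-a)/2)^0 * ((2*q-1)^2)^1 * (q*(1-q))^5 +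
      ((221:ℝ)/32) * (2*a-1)^8 * ((1-a)/2)^0 * ((2*q-1)^2)^2 * (q*(1-q))^4 +
      ((9:ℝ)/16) * (2*a-1)^8 * ((1-a)/2)^0 * ((2*q-1)^2)^3 * (q*(1-q))^3 := by
    have hx : (0:ℝ) ≤ 2*a-1 := by linarith
    have hy : (0:ℝ) ≤ (1-a)/2 := by linarith
    have hs2 : (0:ℝ) ≤ q*(1-q) := mul_nonneg hq0.le hq1.le
    repeat first
    | exact pow_nonneg hx _
    | exact pow_nonneg hy _
    | exact pow_nonneg hs2 _
    | exact pow_nonneg (sq_nonneg _) _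
    | exact hx
    | exact hy
    | exact hs2
    | apply add_nonneg
    | apply mul_nonneg
    | norm_num
  rw [← sub_nonneg]
  have keyid : ((q*(1-q)*((a)*(1+(a))/2*(q*(1-q)) + (a)*(2-(a))/2*(q*q)/2)) * ((a)*(2-(a))/2*(q*(1-q)) + (a)*(1+(a))/2*(q*q) + ((1-(a))*(2-(a))/2*((1-q)*(1-q)) + (1-(a))*(1+(a))/2*((1-q)*q))) + ((a)*(2-(a))/2*(q*q) + (a)*(1+(a))/2*(q*(1-q)) + ((1-(a))*(2-(a))/2*((1-q)*q) + (1-(a))*(1+(a))/2*((1-q)*(1-q)))) * (q*q*((a)*(1+(a))/2*(q*q) + (a)*(2-(a))/2*(q*(1-q))/2))) * (((a)*(2-(a))/2*((1-q)*q) + (a)*(1+(a))/2*((1-q)*(1-q)) + ((1-(a))*(2-(a))/2*(q*q) + (1-(a))*(1+(a))/2*(q*(1-q)))) * ((a)*(2-(a))/2*((1-q)*(1-q)) + (a)*(1+(a))/2*((1-q)*q) + ((1-(a))*(2-(a))/2*(q*(1-q)) + (1-(a))*(1+(a))/2*(q*q)))) + (((a)*(2-(a))/2*(q*q) + (a)*(1+(a))/2*(q*(1-q))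 + ((1-(a))*(2-(a))/2*((1-q)*q) + (1-(a))*(1+(a))/2*((1-q)*(1-q)))) * ((a)*(2-(a))/2*(q*(1-q)) + (a)*(1+(a))/2*(q*q) + ((1-(a))*(2-(a))/2*((1-q)*(1-q)) + (1-(a))*(1+(a))/2*((1-q)*q)))) * (((1-q)*(1-q)*((a)*(1+(a))/2*((1-q)*(1-q)) + (a)*(2-(a))/2*((1-q)*q)/2)) * ((a)*(2-(a))/2*((1-q)*(1-q)) + (a)*(1+(a))/2*((1-q)*q) + ((1-(a))*(2-(a))/2*(q*(1-q)) + (1-(a))*(1+(a))/2*(q*q))) + ((a)*(2-(a))/2*((1-q)*q) + (a)*(1+(a))/2*((1-q)*(1-q)) + ((1-(a))*(2-(a))/2*(q*q) + (1-(a))*(1+(a))/2*(q*(1-q)))) * ((1-q)*q*((a)*(1+(a))/2*((1-q)*q) + (a)*(2-(a))/2*((1-q)*(1-q))/2)))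
      - (q ^ 2 + (1 - q) ^ 2) * (1 + (q ^ 2 + (1 - q) ^ 2)) / 2 * ((((a)*(2-(a))/2*(q*q) + (a)*(1+(a))/2*(q*(1-q)) + ((1-(a))*(2-(a))/2*((1-q)*q) + (1-(a))*(1+(a))/2*((1-q)*(1-q)))) * ((a)*(2-(a))/2*(q*(1-q)) + (a)*(1+(a))/2*(q*q) + ((1-(a))*(2-(a))/2*((1-q)*(1-q)) + (1-(a))*(1+(a))/2*((1-q)*q)))) * (((a)*(2-(a))/2*((1-q)*q) + (a)*(1+(a))/2*((1-q)*(1-q)) + ((1-(a))*(2-(a))/2*(q*q) + (1-(a))*(1+(a))/2*(q*(1-q)))) * ((a)*(2-(a))/2*((1-q)*(1-q)) + (a)*(1+(a))/2*((1-q)*q) + ((1-(a))*(2-(a))/2*(q*(1-q)) + (1-(a))*(1+(a))/2*(q*q)))))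
      = (552960:ℝ) * (2*a-1)^1 * ((1-a)/2)^7 * ((2*q-1)^2)^0 * (q*(1-q))^6 +
      (746496:ℝ) * (2*a-1)^1 * ((1-a)/2)^7 * ((2*q-1)^2)^1 * (q*(1-q))^5 +
      (400896:ℝ) * (2*a-1)^1 * ((1-a)/2)^7 * ((2*q-1)^2)^2 * (q*(1-q))^4 +
      (107136:ℝ) * (2*a-1)^1 * ((1-a)/2)^7 * ((2*q-1)^2)^3 * (q*(1-q))^3 +
      (14256:ℝ) * (2*a-1)^1 * ((1-a)/2)^7 * ((2*q-1)^2)^4 * (q*(1-q))^2 +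
      (756:ℝ) * (2*a-1)^1 * ((1-a)/2)^7 * ((2*q-1)^2)^5 * (q*(1-q))^1 +
      (981504:ℝ) * (2*a-1)^2 * ((1-a)/2)^6 * ((2*q-1)^2)^0 * (q*(1-q))^6 +
      (1287936:ℝ) * (2*a-1)^2 * ((1-a)/2)^6 * ((2*q-1)^2)^1 * (q*(1-q))^5 +
      (671616:ℝ) * (2*a-1)^2 * ((1-a)/2)^6 * ((2*q-1)^2)^2 * (q*(1-q))^4 +
      (174096:ℝ) * (2*a-1)^2 * ((1-a)/2)^6 * ((2*q-1)^2)^3 * (q*(1-q))^3 +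
      (22446:ℝ) * (2*a-1)^2 * ((1-a)/2)^6 * ((2*q-1)^2)^4 * (q*(1-q))^2 +
      (1152:ℝ) * (2*a-1)^2 * ((1-a)/2)^6 * ((2*q-1)^2)^5 * (q*(1-q))^1 +
      (746496:ℝ) * (2*a-1)^3 * ((1-a)/2)^5 * ((2*q-1)^2)^0 * (q*(1-q))^6 +
      (939648:ℝ) * (2*a-1)^3 * ((1-a)/2)^5 * ((2*q-1)^2)^1 * (q*(1-q))^5 +
      (467808:ℝ) * (2*a-1)^3 * ((1-a)/2)^5 * ((2*q-1)^2)^2 * (q*(1-q))^4 +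
      (115128:ℝ) * (2*a-1)^3 * ((1-a)/2)^5 * ((2*q-1)^2)^3 * (q*(1-q))^3 +
      (13998:ℝ) * (2*a-1)^3 * ((1-a)/2)^5 * ((2*q-1)^2)^4 * (q*(1-q))^2 +
      (672:ℝ) * (2*a-1)^3 * ((1-a)/2)^5 * ((2*q-1)^2)^5 * (q*(1-q))^1 +
      (315360:ℝ) * (2*a-1)^4 * ((1-a)/2)^4 * ((2*q-1)^2)^0 * (q*(1-q))^6 +
      (375120:ℝ) * (2*a-1)^4 * ((1-a)/2)^4 * ((2*q-1)^2)^1 * (q*(1-q))^5 +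
      (174830:ℝ) * (2*a-1)^4 * ((1-a)/2)^4 * ((2*q-1)^2)^2 * (q*(1-q))^4 +
      (39782:ℝ) * (2*a-1)^4 * ((1-a)/2)^4 * ((2*q-1)^2)^3 * (q*(1-q))^3 +
      (4396:ℝ) * (2*a-1)^4 * ((1-a)/2)^4 * ((2*q-1)^2)^4 * (q*(1-q))^2 +
      (187:ℝ) * (2*a-1)^4 * ((1-a)/2)^4 * ((2*q-1)^2)^5 * (q*(1-q))^1 +
      (79920:ℝ) * (2*a-1)^5 * ((1-a)/2)^3 * ((2*q-1)^2)^0 * (q*(1-q))^6 +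
      (88260:ℝ) * (2*a-1)^5 * ((1-a)/2)^3 * ((2*q-1)^2)^1 * (q*(1-q))^5 +
      (37585:ℝ) * (2*a-1)^5 * ((1-a)/2)^3 * ((2*q-1)^2)^2 * (q*(1-q))^4 +
      ((30539:ℝ)/4) * (2*a-1)^5 * ((1-a)/2)^3 * ((2*q-1)^2)^3 * (q*(1-q))^3 +
      ((1451:ℝ)/2) * (2*a-1)^5 * ((1-a)/2)^3 * ((2*q-1)^2)^4 * (q*(1-q))^2 +
      ((99:ℝ)/4) * (2*a-1)^5 * ((1-a)/2)^3 * ((2*q-1)^2)^5 * (q*(1-q))^1 +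
      (12150:ℝ) * (2*a-1)^6 * ((1-a)/2)^2 * ((2*q-1)^2)^0 * (q*(1-q))^6 +
      (12189:ℝ) * (2*a-1)^6 * ((1-a)/2)^2 * ((2*q-1)^2)^1 * (q*(1-q))^5 +
      ((36735:ℝ)/8) * (2*a-1)^6 * ((1-a)/2)^2 * ((2*q-1)^2)^2 * (q*(1-q))^4 +
      ((1581:ℝ)/2) * (2*a-1)^6 * ((1-a)/2)^2 * ((2*q-1)^2)^3 * (q*(1-q))^3 +
      ((469:ℝ)/8) * (2*a-1)^6 * ((1-a)/2)^2 * ((2*q-1)^2)^4 * (q*(1-q))^2 +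
      ((5:ℝ)/4) * (2*a-1)^6 * ((1-a)/2)^2 * ((2*q-1)^2)^5 * (q*(1-q))^1 +
      (1026:ℝ) * (2*a-1)^7 * ((1-a)/2)^1 * ((2*q-1)^2)^0 * (q*(1-q))^6 +
      (909:ℝ) * (2*a-1)^7 * ((1-a)/2)^1 * ((2*q-1)^2)^1 * (q*(1-q))^5 +
      ((2311:ℝ)/8) * (2*a-1)^7 * ((1-a)/2)^1 * ((2*q-1)^2)^2 * (q*(1-q))^4 +
      ((615:ℝ)/16) * (2*a-1)^7 * ((1-a)/2)^1 * ((2*q-1)^2)^3 * (q*(1-q))^3 +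
      ((7:ℝ)/4) * (2*a-1)^7 * ((1-a)/2)^1 * ((2*q-1)^2)^4 * (q*(1-q))^2 +
      ((297:ℝ)/8) * (2*a-1)^8 * ((1-a)/2)^0 * ((2*q-1)^2)^0 * (q*(1-q))^6 +
      ((447:ℝ)/16) * (2*a-1)^8 * ((1-a)/2)^0 * ((2*q-1)^2)^1 * (q*(1-q))^5 +
      ((221:ℝ)/32) * (2*a-1)^8 * ((1-a)/2)^0 * ((2*q-1)^2)^2 * (q*(1-q))^4 +
      ((9:ℝ)/16) * (2*a-1)^8 * ((1-a)/2)^0 * ((2*q-1)^2)^3 * (q*(1-q))^3 := by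
    ring
  exact le_of_le_of_eq cert keyid.symm

set_option maxRecDepth 10000 in
set_option maxHeartbeats 1600000 in
/-- in tight competition (project 1 succeeds iff both backers pledge
to it), in state V = (1,0) observational learning never harms project 1's success
probability: P(x₁=1|(1,0))·P(x₂=1|x₁=1,(1,0)) ≥ P(x₁=1|(1,0))·a₂(1+a₂)/2,
where a₂ = p₂² + (1−p₂)² gives the no-learning pledge probability. -/
theorem stmt17 (p1 p2 : ℝ) (h1 : 1/2 < p1) (h1' : p1 < 1)
    (h2 : 1/2 < p2) (h2' : p2 < 1) :
    condPledge1 p1 (true, false) * pledge1OL p1 p2 (true, false)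
      ≥ condPledge1 p1 (true, false) *
          ((p2^2 + (1-p2)^2) * (1 + (p2^2 + (1-p2)^2)) / 2) := by
  have hC : 0 ≤ condPledge1 p1 (true, false) := by
    rw [cp10]; positivity
  rw [ge_iff_le]
  apply mul_le_mul_of_nonneg_left _ hC
  rw [← sub_nonneg]
  simp only [pledge1OL, postOL, Fintype.sum_prod_type, Fintype.sum_bool,
    cp10, cp11, cp01, cp00, sigProb]
  norm_num
  exact keygen (p1^2+(1-p1)^2) p2
    (by nlinarith [mul_pos (sub_pos.2 h1) (sub_pos.2 h1)])
    (by nlinarith [mul_pos (by linarith : (0:ℝ) < p1) (by linarith : (0:ℝ) < 1 - p1)])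
    h2 h2'
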